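/- Let L ⊆ M_{n,ℓ,t} be a t-spread strongly stable set with ℓ < d. Then |Shad_t(L)| = Σ_{k = 1 + t_1 + ... + t_{ℓ-1}}^{n - t_ℓ} m_{≤ k}(L). -/

import Mathlib

open Multiset Finset

/-- A monomial in `K[x_1,…,x_n]` is encoded by the multiset of its variable
indices (each index lies in `[1, n]`).  `TSpread n d t u` says that `u` is a
t-spread monomial: its degree is at most `d`, its indices lie in `[1,n]`, and
consecutive indices `j_k ≤ j_{k+1}` of its sorted index list satisfy
`j_{k+1} - j_k ≥ t_k` (here `t 1 = t_1, …, t (d-1) = t_{d-1}`). -/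
def TSpread (n d : ℕ) (t : ℕ → ℕ) (u : Multiset ℕ) : Prop :=
  u.card ≤ d ∧ (∀ i ∈ u, 1 ≤ i ∧ i ≤ n) ∧
    ∀ k : ℕ, k + 1 < u.card →
      (u.sort (· ≤ ·)).getD k 0 + t (k + 1) ≤ (u.sort (· ≤ ·)).getD (k + 1) 0

/-- `Mset n d ℓ t` : the set `M_{n,ℓ,t}` of t-spread monomials of degree `ℓ`. -/
def Mset (n d ℓ : ℕ) (t : ℕ → ℕ) : Set (Multiset ℕ) :=
  {u | TSpread n d t u ∧ u.card = ℓ}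

/-- the t-spread shadow `Shad_t(L) = {x_i w : w ∈ L, x_i w t-spread, i = 1..n}`. -/
def Shad (n d : ℕ) (t : ℕ → ℕ) (L : Set (Multiset ℕ)) : Set (Multiset ℕ) :=
  {v | ∃ w ∈ L, ∃ i, 1 ≤ i ∧ i ≤ n ∧ v = i ::ₘ w ∧ TSpread n d t v}

/-- largest variable index dividing `u` (0 for the constant monomial). -/
def maxVar (u : Multiset ℕ) : ℕ := (u.sort (· ≤ ·)).getLastD 0

/-- `lexGE u v` : `u ≥_lex v` for monomials of equal degree, where the
lexicographic order is induced by `x_1 > x_2 > ⋯ > x_n`. -/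
def lexGE (u v : Multiset ℕ) : Prop :=
  u = v ∨ List.Lex (· < ·) (u.sort (· ≤ ·)) (v.sort (· ≤ ·))

/-- `L` is a t-spread strongly stable set. -/
def StronglyStableSet (n d : ℕ) (t : ℕ → ℕ) (L : Set (Multiset ℕ)) : Prop :=
  ∀ u ∈ L, ∀ i ∈ u, ∀ j : ℕ, 1 ≤ j → j < i →
    TSpread n d t (j ::ₘ u.erase i) → (j ::ₘ u.erase i) ∈ L

/-- `L` is a t-spread lex set (inside `M_{n,ℓ,t}`). -/
def LexSet (n d ℓ : ℕ) (t : ℕ → ℕ) (L : Set (Multiset ℕ)) : Prop :=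
  ∀ u ∈ L, ∀ v ∈ Mset n d ℓ t, lexGE v u → v ∈ L

/-- `m_i(L)` : number of monomials of `L` with largest variable index `i`. -/
noncomputable def mEq (i : ℕ) (L : Set (Multiset ℕ)) : ℕ :=
  {u ∈ L | maxVar u = i}.ncard

/-- `m_{≤ i}(L)` : number of monomials of `L` with largest variable index `≤ i`. -/
noncomputable def mLe (i : ℕ) (L : Set (Multiset ℕ)) : ℕ :=
  {u ∈ L | maxVar u ≤ i}.ncard

/-- `I` is (the set of monomials of) a monomial ideal of `K[x_1,…,x_n]`. -/
def MonIdeal (n : ℕ) (I : Set (Multiset ℕ)) : Prop :=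
  (∀ u ∈ I, ∀ i ∈ u, 1 ≤ i ∧ i ≤ n) ∧
    ∀ u ∈ I, ∀ i : ℕ, 1 ≤ i → i ≤ n → (i ::ₘ u) ∈ I

/-- `I` is generated by t-spread monomials. -/
def TSpreadGen (n d : ℕ) (t : ℕ → ℕ) (I : Set (Multiset ℕ)) : Prop :=
  ∀ u ∈ I, ∃ v ∈ I, TSpread n d t v ∧ v ≤ u

/-- The t-spread operator `a ↦ a^{(n,ℓ,t)}`:  if `a = Σ_{j=p}^{ℓ} C(a_j, j)` is
the Macaulay expansion of `a` with respect to `ℓ`, then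
`tOp t_ℓ ℓ a = Σ_{j=p+1}^{ℓ+1} C(a_{j-1} + 1 - t_ℓ, j)`, computed greedily. -/
noncomputable def tOp (s : ℕ) : ℕ → ℕ → ℕ
  | 0, _ => 0
  | ℓ + 1, a =>
    if a = 0 then 0
    else
      (sSup {b | Nat.choose b (ℓ + 1) ≤ a} + 1 - s).choose (ℓ + 2) +
        tOp s ℓ (a - Nat.choose (sSup {b | Nat.choose b (ℓ + 1) ≤ a}) (ℓ + 1))

/-- The graded Betti number `β_{i,j}(I)` of a t-spread strongly stable ideal,
via the Eliahou–Kervaire-type formula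
`β_{i,i+q}(I) = Σ_{u ∈ G(I)_q} C(max(u) - 1 - Σ_{h=1}^{q-1} t_h, i)`. -/
noncomputable def betti (t : ℕ → ℕ) (I : Set (Multiset ℕ)) (i j : ℕ) : ℕ :=
  ∑ᶠ u ∈ {u ∈ I | u.card = j - i ∧ ∀ v ∈ I, v ≤ u → v = u},
    (maxVar u - 1 - ∑ h ∈ Finset.Icc 1 (j - i - 1), t h).choose i

section Aux

private lemma msort_eq {u : Multiset ℕ} {l : List ℕ} (hl : l.Pairwise (· ≤ ·))
    (h : (l : Multiset ℕ) = u) : u.sort (· ≤ ·) = l := by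
  subst h
  exact List.Perm.eq_of_pairwise' (Multiset.pairwise_sort _ _) hl
    (Quotient.exact (Multiset.sort_eq _ _))

private lemma sort_cons_max {w : Multiset ℕ} {k : ℕ} (h : ∀ i ∈ w, i ≤ k) :
    (k ::ₘ w).sort (· ≤ ·) = w.sort (· ≤ ·) ++ [k] := by
  apply msort_eq
  · rw [List.pairwise_append]
    refine ⟨Multiset.pairwise_sort _ _, List.pairwise_singleton _ _, ?_⟩
    intro a ha b hb
    rw [List.mem_singleton] at hb
    subst hb
    exact h a (by simpa using ha)
  · rw [← Multiset.coe_add, Multiset.sort_eq]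
    show w + {k} = k ::ₘ w
    rw [← Multiset.singleton_add, add_comm]

private lemma maxVar_cons_max {w : Multiset ℕ} {k : ℕ} (h : ∀ i ∈ w, i ≤ k) :
    maxVar (k ::ₘ w) = k := by
  unfold maxVar
  rw [sort_cons_max h, List.getLastD_concat]

private lemma le_maxVar {u : Multiset ℕ} {i : ℕ} (h : i ∈ u) : i ≤ maxVar u := by
  have hl : i ∈ u.sort (· ≤ ·) := by simpa using h
  have hs := Multiset.pairwise_sort u (· ≤ ·)
  set l := u.sort (· ≤ ·) with hldef
  have hne : l ≠ [] := List.ne_nil_of_mem hl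
  have hdec := List.dropLast_append_getLast hne
  show i ≤ l.getLastD 0
  rw [← hdec, List.getLastD_concat]
  rw [← hdec] at hl hs
  rw [List.pairwise_append] at hs
  rcases List.mem_append.1 hl with h1 | h1
  · exact hs.2.2 _ h1 _ (List.mem_singleton_self _)
  · exact le_of_eq (List.mem_singleton.1 h1)

private lemma maxVar_mem {u : Multiset ℕ} (h : u ≠ 0) : maxVar u ∈ u := by
  have hne : u.sort (· ≤ ·) ≠ [] := by
    intro hc
    apply h
    have := Multiset.sort_eq u (· ≤ ·)
    rw [hc] at this
    simpa using this.symm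
  have hmem := List.getLast_mem hne
  have hx : maxVar u = (u.sort (· ≤ ·)).getLast hne := by
    unfold maxVar
    conv_lhs => rw [← List.dropLast_append_getLast hne]
    rw [List.getLastD_concat]
  rw [hx]
  rw [← Multiset.mem_sort (· ≤ ·)]
  exact hmem

private lemma getLastD_eq_getD (l : List ℕ) : l.getLastD 0 = l.getD (l.length - 1) 0 := by
  rcases eq_or_ne l [] with rfl | h
  · rfl
  · conv_lhs => rw [← List.dropLast_append_getLast h, List.getLastD_concat]
    have hlen : l.length - 1 < l.length := by
      have : l.length ≠ 0 := fun hc => h (List.length_eq_zero_iff.mp hc)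
      omega
    rw [List.getD_eq_getElem?_getD, List.getElem?_eq_getElem hlen, List.getLast_eq_getElem]
    rfl

private lemma maxVar_eq_getD {u : Multiset ℕ} :
    maxVar u = (u.sort (· ≤ ·)).getD (Multiset.card u - 1) 0 := by
  unfold maxVar
  rw [getLastD_eq_getD, Multiset.length_sort]

private lemma tspread_cons {n d : ℕ} {t : ℕ → ℕ} {w : Multiset ℕ} {k : ℕ}
    (hw : TSpread n d t w) (hd : Multiset.card w < d)
    (hmax : ∀ i ∈ w, i ≤ k) (h1 : 1 ≤ k) (hn : k ≤ n)
    (hgap : maxVar w + t (Multiset.card w) ≤ k) : TSpread n d t (k ::ₘ w) := by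
  obtain ⟨hc, hmem, hsp⟩ := hw
  have hsort := sort_cons_max hmax
  have hlen : (w.sort (· ≤ ·)).length = Multiset.card w := Multiset.length_sort _
  have hget : ∀ m, m < Multiset.card w →
      ((k ::ₘ w).sort (· ≤ ·)).getD m 0 = (w.sort (· ≤ ·)).getD m 0 := by
    intro m hm
    rw [hsort, List.getD_eq_getElem?_getD, List.getD_eq_getElem?_getD,
      List.getElem?_append_left (by omega)]
  refine ⟨by simpa using hd, ?_, ?_⟩
  · intro i hi
    rcases Multiset.mem_cons.1 hi with rfl | hi
    · exact ⟨h1, hn⟩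
    · exact hmem i hi
  · intro j hj
    rw [Multiset.card_cons] at hj
    rcases lt_or_eq_of_le (Nat.lt_succ_iff.mp hj) with hlt | heq
    · rw [hget j (by omega), hget (j+1) hlt]
      exact hsp j hlt
    · rw [hget j (by omega)]
      have hk : ((k ::ₘ w).sort (· ≤ ·)).getD (j+1) 0 = k := by
        rw [hsort, List.getD_eq_getElem?_getD, List.getElem?_append_right (by omega)]
        have h0 : j + 1 - (w.sort (· ≤ ·)).length = 0 := by omega
        rw [h0]
        rfl
      rw [hk]
      have hj' : j = Multiset.card w - 1 := by omega
      rw [maxVar_eq_getD] at hgap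
      have ht : t (j + 1) = t (Multiset.card w) := by rw [heq]
      rw [ht, hj']
      exact hgap

private lemma tspread_of_cons {n d : ℕ} {t : ℕ → ℕ} {w : Multiset ℕ} {k : ℕ}
    (hmax : ∀ i ∈ w, i ≤ k) (hv : TSpread n d t (k ::ₘ w)) :
    TSpread n d t w ∧ (w = 0 ∨ maxVar w + t (Multiset.card w) ≤ k) := by
  obtain ⟨hc, hmem, hsp⟩ := hv
  have hsort := sort_cons_max hmax
  have hlen : (w.sort (· ≤ ·)).length = Multiset.card w := Multiset.length_sort _
  have hget : ∀ m, m < Multiset.card w →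
      ((k ::ₘ w).sort (· ≤ ·)).getD m 0 = (w.sort (· ≤ ·)).getD m 0 := by
    intro m hm
    rw [hsort, List.getD_eq_getElem?_getD, List.getD_eq_getElem?_getD,
      List.getElem?_append_left (by omega)]
  rw [Multiset.card_cons] at hc hsp
  refine ⟨⟨by omega, fun i hi => hmem i (Multiset.mem_cons_of_mem hi), ?_⟩, ?_⟩
  · intro j hj
    rw [← hget j (by omega), ← hget (j+1) (by omega)]
    exact hsp j (by omega)
  · rcases eq_or_ne w 0 with rfl | hw0
    · exact Or.inl rfl
    · right
      have hcard : 1 ≤ Multiset.card w := by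
        rwa [Nat.one_le_iff_ne_zero, Ne, Multiset.card_eq_zero]
      have h1 := hsp (Multiset.card w - 1) (by omega)
      rw [hget (Multiset.card w - 1) (by omega)] at h1
      have h2 : ((k ::ₘ w).sort (· ≤ ·)).getD (Multiset.card w - 1 + 1) 0 = k := by
        rw [hsort, List.getD_eq_getElem?_getD, List.getElem?_append_right (by omega)]
        have h0 : Multiset.card w - 1 + 1 - (w.sort (· ≤ ·)).length = 0 := by omega
        rw [h0]
        rfl
      rw [h2] at h1
      have h3 : Multiset.card w - 1 + 1 = Multiset.card w := by omega
      rw [h3] at h1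
      rw [maxVar_eq_getD]
      exact h1

private lemma maxVar_lower {n d : ℕ} {t : ℕ → ℕ} {u : Multiset ℕ} (hu : TSpread n d t u)
    (hne : u ≠ 0) : 1 + ∑ j ∈ Finset.Icc 1 (Multiset.card u - 1), t j ≤ maxVar u := by
  obtain ⟨-, hmem, hsp⟩ := hu
  have hlen : (u.sort (· ≤ ·)).length = Multiset.card u := Multiset.length_sort _
  have hpos : 0 < Multiset.card u := Multiset.card_pos.mpr hne
  have key : ∀ m, m < Multiset.card u →
      1 + ∑ j ∈ Finset.Icc 1 m, t j ≤ (u.sort (· ≤ ·)).getD m 0 := by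
    intro m
    induction m with
    | zero =>
      intro hm
      have hmem0 : (u.sort (· ≤ ·)).getD 0 0 ∈ u := by
        rw [List.getD_eq_getElem?_getD, List.getElem?_eq_getElem (by omega)]
        rw [← Multiset.mem_sort (· ≤ ·)]
        exact List.getElem_mem _
      have : Finset.Icc 1 0 = (∅ : Finset ℕ) := Finset.Icc_eq_empty (by omega)
      rw [this, Finset.sum_empty, add_zero]
      exact (hmem _ hmem0).1
    | succ m ih =>
      intro hm
      have h1 := ih (by omega)
      have h2 := hsp m hm
      rw [Finset.sum_Icc_succ_top (by omega)]
      omega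
  rw [maxVar_eq_getD]
  exact key (Multiset.card u - 1) (by omega)

private lemma mset_finite (n d ℓ : ℕ) (t : ℕ → ℕ) : (Mset n d ℓ t).Finite := by
  classical
  apply Set.Finite.subset (Set.finite_Icc (0 : Multiset ℕ) (ℓ • (Finset.Icc 1 n).val))
  rintro u ⟨⟨-, hmem, -⟩, hcard⟩
  simp only [Set.mem_Icc]
  refine ⟨Multiset.zero_le _, ?_⟩
  rw [Multiset.le_iff_count]
  intro a
  rw [Multiset.count_nsmul]
  by_cases ha : a ∈ u
  · have h1 : a ∈ (Finset.Icc 1 n).val :=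
      Finset.mem_def.mp (Finset.mem_Icc.2 ⟨(hmem a ha).1, (hmem a ha).2⟩)
    rw [Multiset.count_eq_one_of_mem (Finset.Icc 1 n).nodup h1, mul_one]
    calc Multiset.count a u ≤ Multiset.card u := Multiset.count_le_card a u
      _ = ℓ := hcard
  · rw [Multiset.count_eq_zero_of_notMem ha]
    exact Nat.zero_le _

end Aux

/-- for a t-spread strongly stable set `L ⊆ M_{n,ℓ,t}` with `ℓ < d`,
`|Shad_t(L)| = Σ_{k = 1 + t_1 + ⋯ + t_{ℓ-1}}^{n - t_ℓ} m_{≤ k}(L)`. -/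
theorem stmt5 (n d ℓ : ℕ) (t : ℕ → ℕ) (hd : 2 ≤ d) (hℓ1 : 1 ≤ ℓ) (hℓ : ℓ < d)
    (L : Set (Multiset ℕ)) (hLM : L ⊆ Mset n d ℓ t)
    (hss : StronglyStableSet n d t L) :
    (Shad n d t L).ncard =
      ∑ k ∈ Finset.Icc (1 + ∑ j ∈ Finset.Icc 1 (ℓ - 1), t j) (n - t ℓ), mLe k L := by
  classical
  set lo := 1 + ∑ j ∈ Finset.Icc 1 (ℓ - 1), t j with hlo
  set hi := n - t ℓ with hhi
  have hL : L.Finite := (mset_finite n d ℓ t).subset hLM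
  have hLfact : ∀ w ∈ L, TSpread n d t w ∧ Multiset.card w = ℓ := fun w hw => hLM hw
  have hLne : ∀ w ∈ L, w ≠ 0 := by
    intro w hw hc
    have h := (hLfact w hw).2
    rw [hc] at h
    simp at h
    omega
  have hLmax1 : ∀ w ∈ L, 1 ≤ maxVar w := by
    intro w hw
    exact ((hLfact w hw).1.2.1 _ (maxVar_mem (hLne w hw))).1
  have hLlo : ∀ w ∈ L, lo ≤ maxVar w := by
    intro w hw
    have h := maxVar_lower (hLfact w hw).1 (hLne w hw)
    rwa [(hLfact w hw).2] at h
  set f : Multiset ℕ × ℕ → Multiset ℕ := fun p => (p.2 + t ℓ) ::ₘ p.1 with hf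
  set S : Set (Multiset ℕ × ℕ) := {p | p.1 ∈ L ∧ maxVar p.1 ≤ p.2 ∧ p.2 ≤ hi} with hS
  have hbd : ∀ p : Multiset ℕ × ℕ, p.1 ∈ L → maxVar p.1 ≤ p.2 → ∀ i ∈ p.1, i ≤ p.2 + t ℓ :=
    fun p _ hm i hi => le_trans (le_trans (le_maxVar hi) hm) (Nat.le_add_right _ _)
  have hmaxf : ∀ p : Multiset ℕ × ℕ, p.1 ∈ L → maxVar p.1 ≤ p.2 → maxVar (f p) = p.2 + t ℓ :=
    fun p hp hm => maxVar_cons_max (hbd p hp hm)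
  have himg : Shad n d t L = f '' S := by
    ext v
    constructor
    · rintro ⟨w, hwL, i, hi1, hin, rfl, hvsp⟩
      obtain ⟨hwt, hwcard⟩ := hLfact w hwL
      set m := maxVar (i ::ₘ w) with hm
      have hmmem : m ∈ i ::ₘ w := maxVar_mem (by simp)
      set w' := (i ::ₘ w).erase m with hw'
      have hveq : m ::ₘ w' = i ::ₘ w := Multiset.cons_erase hmmem
      have hmax' : ∀ x ∈ w', x ≤ m := fun x hx => le_maxVar (Multiset.mem_of_mem_erase hx)
      have hvsp' : TSpread n d t (m ::ₘ w') := by rw [hveq]; exact hvsp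
      have hsp' := tspread_of_cons hmax' hvsp'
      have hcard' : Multiset.card w' = ℓ := by
        rw [hw', Multiset.card_erase_of_mem hmmem, Multiset.card_cons, hwcard]
        rfl
      have hw'ne : w' ≠ 0 := by
        intro hc
        rw [hc] at hcard'
        simp at hcard'
        omega
      have hgap : maxVar w' + t ℓ ≤ m := by
        rcases hsp'.2 with hc | hc
        · exact absurd hc hw'ne
        · rwa [hcard'] at hc
      have hw'L : w' ∈ L := by
        have him : i ≤ m := le_maxVar (Multiset.mem_cons_self i w)
        rcases eq_or_lt_of_le him with heq | hlt
        · have hww : w' = w := by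
            rw [hw', show (i ::ₘ w).erase m = (m ::ₘ w).erase m by rw [heq],
              Multiset.erase_cons_head]
          rwa [hww]
        · have hmw : m ∈ w := by
            rcases Multiset.mem_cons.1 hmmem with h | h
            · omega
            · exact h
          have hww : w' = i ::ₘ w.erase m := by
            rw [hw', Multiset.erase_cons_tail _ (ne_of_lt hlt)]
          have hts : TSpread n d t (i ::ₘ w.erase m) := by rw [← hww]; exact hsp'.1
          rw [hww]
          exact hss w hwL m hmw i hi1 hlt hts
      have hmn : m ≤ n := (hvsp.2.1 m hmmem).2
      have htm : t ℓ ≤ m := le_trans (Nat.le_add_left _ _) hgap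
      refine ⟨(w', m - t ℓ), ⟨hw'L, show maxVar w' ≤ m - t ℓ by omega, show m - t ℓ ≤ hi by rw [hhi]; omega⟩, ?_⟩
      show (m - t ℓ + t ℓ) ::ₘ w' = i ::ₘ w
      rw [Nat.sub_add_cancel htm, hveq]
    · rintro ⟨⟨w, k⟩, ⟨hwL, hmk, hkhi⟩, rfl⟩
      obtain ⟨hwt, hwcard⟩ := hLfact w hwL
      have h1k : 1 ≤ k := le_trans (hLmax1 w hwL) hmk
      rw [hhi] at hkhi
      have hkn : k + t ℓ ≤ n := by omega
      refine ⟨w, hwL, k + t ℓ, by omega, hkn, rfl, ?_⟩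
      apply tspread_cons hwt (by omega) (hbd (w, k) hwL hmk) (by omega) hkn
      rw [hwcard]
      have hmk' : maxVar w ≤ k := hmk
      omega
  have hinj : Set.InjOn f S := by
    rintro ⟨w, k⟩ hw ⟨w', k'⟩ hw' heq
    have h1 := hmaxf (w, k) hw.1 hw.2.1
    have h2 := hmaxf (w', k') hw'.1 hw'.2.1
    rw [heq, h2] at h1
    have hk : k = k' := by omega
    subst hk
    have hww : w = w' := by
      have h3 : (k + t ℓ) ::ₘ w = (k + t ℓ) ::ₘ w' := heq
      exact (Multiset.cons_inj_right _).1 h3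
    rw [hww]
  rw [himg, Set.ncard_image_of_injOn hinj]
  have hmLe : ∀ k, mLe k L = (hL.toFinset.filter (fun w => maxVar w ≤ k)).card := by
    intro k
    rw [mLe, ← Set.ncard_coe_finset]
    congr 1
    ext u
    simp [Set.Finite.mem_toFinset]
  have hdisj : ∀ k ∈ Finset.Icc lo hi, ∀ k' ∈ Finset.Icc lo hi, k ≠ k' →
      Disjoint ((hL.toFinset.filter (fun w => maxVar w ≤ k)).image (fun w => (w, k)))
        ((hL.toFinset.filter (fun w => maxVar w ≤ k')).image (fun w => (w, k'))) := by
    intro k _ k' _ hkk'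
    simp only [Finset.disjoint_left, Finset.mem_image, Finset.mem_filter]
    rintro p ⟨w, _, rfl⟩ ⟨w', _, heq⟩
    exact hkk' ((congrArg Prod.snd heq).symm)
  have hScoe : S = ↑((Finset.Icc lo hi).biUnion
      (fun k => (hL.toFinset.filter (fun w => maxVar w ≤ k)).image (fun w => (w, k)))) := by
    ext ⟨w, k⟩
    simp only [hS, Set.mem_setOf_eq, Finset.coe_biUnion, Set.mem_iUnion, Finset.mem_coe,
      Finset.mem_image, Finset.mem_filter, Finset.mem_Icc, Set.Finite.mem_toFinset]
    constructor
    · rintro ⟨hwL, hmk, hk⟩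
      exact ⟨k, ⟨le_trans (hLlo w hwL) hmk, hk⟩, w, ⟨hwL, hmk⟩, rfl⟩
    · rintro ⟨k', ⟨_, hk2⟩, w', ⟨hw'L, hw'm⟩, heq⟩
      obtain ⟨rfl, rfl⟩ : w' = w ∧ k' = k :=
        ⟨congrArg Prod.fst heq, congrArg Prod.snd heq⟩
      exact ⟨hw'L, hw'm, hk2⟩
  rw [hScoe, Set.ncard_coe_finset, Finset.card_biUnion hdisj]
  apply Finset.sum_congr rfl
  intro k _
  rw [Finset.card_image_of_injective _ (fun a b hab => congrArg Prod.fst hab), hmLe k]
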